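/- arXiv:2007.05918 — 3 statements merged into one kernel-verified Lean document; each statement's English description precedes it below -/
import Mathlib

section
/- Generalized Thomson principle: for disjoint nonempty subsets A, B of a finite state space of a reversible irreducible Markov chain, and any nontrivial flow ψ, Cap(A,B) ≥ (Σ_η h_{A,B}(η)·(div ψ)(η))² / ‖ψ‖², where h_{A,B}(η) = P_η[τ_A < τ_B] is the equilibrium potential, Cap(A,B) = D(h_{A,B}) is the capacity, and (div ψ)(η) = Σ_ζ ψ(η,ζ). -/
/-- Generalized Thomson principle. For disjoint nonempty subsets `A`, `B` of
the finite state space of a reversible irreducible Markov chain and any nontrivial flow `ψ`,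
`Cap(A,B) ≥ (Σ_η h_{A,B}(η)·(div ψ)(η))² / ‖ψ‖²`, where `h = h_{A,B}` is the equilibrium
potential (equal to 1 on `A`, 0 on `B`, harmonic elsewhere) and `Cap(A,B) = D(h)`. -/
theorem generalized_thomson_principle
    {H : Type*} [Fintype H] [DecidableEq H]
    (q : H → H → ℝ) (μ : H → ℝ) (ψ : H → H → ℝ) (h : H → ℝ)
    (A B : Finset H)
    (hq0 : ∀ η ζ, 0 ≤ q η ζ) (hqd : ∀ η, q η η = 0)
    (hμ : ∀ η, 0 < μ η) (hμsum : ∑ η, μ η = 1)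
    (hrev : ∀ η ζ, μ η * q η ζ = μ ζ * q ζ η)
    (hirr : ∀ η ζ, Relation.ReflTransGen (fun a b => 0 < q a b) η ζ)
    (hA : A.Nonempty) (hB : B.Nonempty) (hAB : Disjoint A B)
    -- `h` is the equilibrium potential between `A` and `B`:
    (hh1 : ∀ η ∈ A, h η = 1) (hh0 : ∀ η ∈ B, h η = 0)
    (hharm : ∀ η, η ∉ A → η ∉ B → ∑ ζ, q η ζ * (h ζ - h η) = 0)
    -- `ψ` is a nontrivial flow:
    (hanti : ∀ η ζ, ψ η ζ = - ψ ζ η)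
    (hcomp : ∀ η ζ, ψ η ζ ≠ 0 → 0 < q η ζ)
    (hnontriv : 0 < (1/2) * ∑ η, ∑ ζ,
        (if 0 < q η ζ then ψ η ζ ^ 2 / (μ η * q η ζ) else 0)) :
    (1/2) * ∑ η, ∑ ζ, μ η * q η ζ * (h ζ - h η)^2
      ≥ (∑ η, h η * (∑ ζ, ψ η ζ))^2
        / ((1/2) * ∑ η, ∑ ζ, (if 0 < q η ζ then ψ η ζ ^ 2 / (μ η * q η ζ) else 0)) := by
  rw [ge_iff_le, div_le_iff₀ hnontriv]
  have hψ0 : ∀ η ζ, ¬ 0 < q η ζ → ψ η ζ = 0 := by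
    intro η ζ hq
    by_contra hne
    exact hq (hcomp η ζ hne)
  -- Step 1: rewrite the linear functional
  have hS : ∑ η, h η * (∑ ζ, ψ η ζ)
      = -(1/2) * ∑ η, ∑ ζ, ψ η ζ * (h ζ - h η) := by
    have hswap : ∑ η, ∑ ζ, ψ η ζ * h ζ = - ∑ η, ∑ ζ, ψ η ζ * h η := by
      rw [Finset.sum_comm, ← Finset.sum_neg_distrib]
      refine Finset.sum_congr rfl fun a _ => ?_
      rw [← Finset.sum_neg_distrib]
      refine Finset.sum_congr rfl fun b _ => ?_
      rw [hanti b a]; ring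
    have hexp : ∑ η, ∑ ζ, ψ η ζ * (h ζ - h η)
        = (∑ η, ∑ ζ, ψ η ζ * h ζ) - ∑ η, ∑ ζ, ψ η ζ * h η := by
      rw [← Finset.sum_sub_distrib]
      refine Finset.sum_congr rfl fun a _ => ?_
      rw [← Finset.sum_sub_distrib]
      refine Finset.sum_congr rfl fun b _ => ?_
      ring
    have : ∑ η, h η * (∑ ζ, ψ η ζ) = ∑ η, ∑ ζ, ψ η ζ * h η := by
      refine Finset.sum_congr rfl fun a _ => ?_
      rw [Finset.mul_sum]
      exact Finset.sum_congr rfl fun b _ => by ring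
    rw [this, hexp, hswap]; ring
  -- Step 2: Cauchy-Schwarz on pairs
  set f : H × H → ℝ := fun p =>
    if 0 < q p.1 p.2 then Real.sqrt (μ p.1 * q p.1 p.2) * (h p.2 - h p.1) else 0 with hf
  set g : H × H → ℝ := fun p =>
    if 0 < q p.1 p.2 then ψ p.1 p.2 / Real.sqrt (μ p.1 * q p.1 p.2) else 0 with hg
  have key := Finset.sum_mul_sq_le_sq_mul_sq Finset.univ f g
  have hfg : ∑ p : H × H, f p * g p = ∑ η, ∑ ζ, ψ η ζ * (h ζ - h η) := by
    rw [Fintype.sum_prod_type]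
    refine Finset.sum_congr rfl fun a _ => Finset.sum_congr rfl fun b _ => ?_
    set p : H × H := (a, b) with hpdef
    simp only [hf, hg]
    by_cases hp : 0 < q p.1 p.2
    · simp only [if_pos hp]
      have hpos : 0 < μ p.1 * q p.1 p.2 := mul_pos (hμ p.1) hp
      have hs : Real.sqrt (μ p.1 * q p.1 p.2) ≠ 0 := by positivity
      have hcalc : Real.sqrt (μ p.1 * q p.1 p.2) * (h p.2 - h p.1)
            * (ψ p.1 p.2 / Real.sqrt (μ p.1 * q p.1 p.2))
          = ψ p.1 p.2 * (h p.2 - h p.1)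
            * (Real.sqrt (μ p.1 * q p.1 p.2) / Real.sqrt (μ p.1 * q p.1 p.2)) := by
        ring
      rw [hcalc, div_self hs, mul_one]
    · simp [if_neg hp, hψ0 p.1 p.2 hp, show ψ a b = 0 from hψ0 p.1 p.2 hp]
  have hf2 : ∑ p : H × H, f p ^ 2 = ∑ η, ∑ ζ, μ η * q η ζ * (h ζ - h η)^2 := by
    rw [Fintype.sum_prod_type]
    refine Finset.sum_congr rfl fun a _ => Finset.sum_congr rfl fun b _ => ?_
    set p : H × H := (a, b) with hpdef
    simp only [hf]
    by_cases hp : 0 < q p.1 p.2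
    · have hpos : 0 ≤ μ p.1 * q p.1 p.2 := le_of_lt (mul_pos (hμ p.1) hp)
      rw [if_pos hp, mul_pow, Real.sq_sqrt hpos]
    · have : q p.1 p.2 = 0 := le_antisymm (not_lt.mp hp) (hq0 p.1 p.2)
      simp [if_neg hp, this, show q a b = 0 from this]
  have hg2 : ∑ p : H × H, g p ^ 2
      = ∑ η, ∑ ζ, (if 0 < q η ζ then ψ η ζ ^ 2 / (μ η * q η ζ) else 0) := by
    rw [Fintype.sum_prod_type]
    refine Finset.sum_congr rfl fun a _ => Finset.sum_congr rfl fun b _ => ?_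
    set p : H × H := (a, b) with hpdef
    simp only [hg]
    by_cases hp : 0 < q p.1 p.2
    · have hpos : 0 ≤ μ p.1 * q p.1 p.2 := le_of_lt (mul_pos (hμ p.1) hp)
      rw [if_pos hp, if_pos hp, div_pow, Real.sq_sqrt hpos]
    · simp [if_neg hp, show ¬ 0 < q a b from hp]
  rw [hfg, hf2, hg2] at key
  rw [hS]
  nlinarith [key]
end

section
/- Condensation of the reversible inclusion process: under d_N·log N → 0, for each x ∈ S_⋆ the invariant probability of the configuration ξ_N^x with all N particles at x satisfies μ_N(ξ_N^x) → 1/|S_⋆| as N → ∞; consequently μ_N(H_N \ {ξ_N^x : x ∈ S_⋆}) → 0. -/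
/-- The weight `w_N(n) = Γ(d_N+n)/(n!Γ(d_N))`, via the recursion
`w(0) = 1`, `w(n+1) = w(n)·(d+n)/(n+1)`. -/
noncomputable def inclW (d : ℝ) : ℕ → ℝ
  | 0 => 1
  | n + 1 => inclW d n * (d + n) / (n + 1)

noncomputable def Hsum (m : ℕ) : ℝ := ∑ k ∈ Finset.range m, 1/(k+1 : ℝ)

lemma Hsum_nonneg (m : ℕ) : 0 ≤ Hsum m := by
  unfold Hsum; positivity

lemma Hsum_succ (m : ℕ) : Hsum (m+1) = Hsum m + 1/(m+1 : ℝ) := by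
  unfold Hsum; rw [Finset.sum_range_succ]

lemma Hsum_le_one_add_log (m : ℕ) (hm : 1 ≤ m) : Hsum m ≤ 1 + Real.log m := by
  induction m with
  | zero => omega
  | succ n ih =>
    rcases Nat.eq_or_lt_of_le hm with h | h
    · obtain rfl : n = 0 := by omega
      unfold Hsum
      have : (0:ℝ) ≤ Real.log 1 + 1 - 1 := by norm_num
      norm_num [Finset.sum_range_succ]
    · have hn : 1 ≤ n := by omega
      have hnpos : (0:ℝ) < n := by exact_mod_cast hn
      have key : 1/((n:ℝ)+1) ≤ Real.log (n+1) - Real.log n := by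
        have h1 : Real.log ((n:ℝ)/(n+1)) ≤ (n:ℝ)/(n+1) - 1 :=
          Real.log_le_sub_one_of_pos (by positivity)
        have h2 : Real.log ((n:ℝ)/(n+1)) = Real.log n - Real.log (n+1) :=
          Real.log_div (ne_of_gt hnpos) (by positivity)
        have h3 : (n:ℝ)/(n+1) - 1 = -(1/((n:ℝ)+1)) := by field_simp; ring
        rw [h2, h3] at h1
        linarith
      have := ih hn
      rw [Hsum_succ]
      push_cast
      linarith

lemma Hsum_pred_le {m N : ℕ} (hm : m ≤ N) (hN : 1 ≤ N) :
    Hsum (m - 1) ≤ 1 + Real.log N := by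
  have hlogN : 0 ≤ Real.log N := Real.log_natCast_nonneg N
  rcases Nat.lt_or_ge m 2 with h | h
  · interval_cases m <;> simp [Hsum] <;> linarith
  · have h1 : 1 ≤ m - 1 := by omega
    refine (Hsum_le_one_add_log _ h1).trans ?_
    have : Real.log (m-1 : ℕ) ≤ Real.log N := by
      apply Real.log_le_log (by exact_mod_cast h1)
      exact_mod_cast Nat.le_trans (Nat.sub_le m 1) hm
    linarith

lemma inclW_pos {d : ℝ} (hd : 0 < d) (n : ℕ) : 0 < inclW d n := by
  induction n with
  | zero => norm_num [inclW]
  | succ k ih =>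
    rw [inclW]
    have : (0:ℝ) < d + k := by positivity
    positivity

lemma inclW_lower {d : ℝ} (hd : 0 < d) {n : ℕ} (hn : 1 ≤ n) : d / n ≤ inclW d n := by
  induction n with
  | zero => omega
  | succ k ih =>
    rcases Nat.eq_or_lt_of_le hn with h | h
    · obtain rfl : k = 0 := by omega
      simp [inclW]
    · have hk : 1 ≤ k := by omega
      have hkpos : (0:ℝ) < k := by exact_mod_cast hk
      have ihk := ih hk
      rw [inclW]
      push_cast
      have hexp : d/(k:ℝ)*(d+(k:ℝ)) = d + d*d/(k:ℝ) := by field_simp; ring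
      have hnum : d ≤ d/(k:ℝ)*(d+(k:ℝ)) := by
        rw [hexp]
        have : 0 ≤ d*d/(k:ℝ) := by positivity
        linarith
      calc d/((k:ℝ)+1) ≤ d/(k:ℝ)*(d+(k:ℝ))/((k:ℝ)+1) := by gcongr
        _ ≤ inclW d k * (d+(k:ℝ))/((k:ℝ)+1) := by gcongr

lemma inclW_upper {d : ℝ} (hd : 0 < d) {n : ℕ} (hn : 1 ≤ n) :
    inclW d n ≤ d / n * Real.exp (d * Hsum (n - 1)) := by
  induction n with
  | zero => omega
  | succ k ih =>
    rcases Nat.eq_or_lt_of_le hn with h | h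
    · obtain rfl : k = 0 := by omega
      simp [inclW, Hsum]
    · have hk : 1 ≤ k := by omega
      have hkpos : (0:ℝ) < k := by exact_mod_cast hk
      have ihk := ih hk
      have hH : Hsum (k + 1 - 1) = Hsum (k - 1) + 1/(k:ℝ) := by
        have hkk : k - 1 + 1 = k := by omega
        have h2 := Hsum_succ (k-1)
        rw [hkk] at h2
        simp only [Nat.add_sub_cancel]
        rw [h2, Nat.cast_sub hk]
        ring_nf
      have hexp : (1 + d/(k:ℝ)) ≤ Real.exp (d * (1/k)) := by
        have := Real.add_one_le_exp (d * (1/k))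
        rw [mul_one_div] at this ⊢
        linarith
      rw [inclW]
      push_cast
      calc inclW d k * (d+(k:ℝ))/((k:ℝ)+1)
          ≤ (d/(k:ℝ) * Real.exp (d * Hsum (k-1))) * (d+(k:ℝ))/((k:ℝ)+1) := by
            gcongr
        _ = d/((k:ℝ)+1) * (Real.exp (d * Hsum (k-1)) * (1+d/(k:ℝ))) := by
            field_simp
            ring
        _ ≤ d/((k:ℝ)+1) * (Real.exp (d * Hsum (k-1)) * Real.exp (d*(1/(k:ℝ)))) := by
            have h2 : (0:ℝ) ≤ d/((k:ℝ)+1) := by positivity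
            have h3 := (Real.exp_pos (d * Hsum (k-1))).le
            exact mul_le_mul_of_nonneg_left
              (mul_le_mul_of_nonneg_left hexp h3) h2
        _ = d/((k:ℝ)+1) * Real.exp (d * Hsum (k+1-1)) := by
            rw [hH, mul_add, Real.exp_add, mul_one_div]

lemma conv_bound {m : ℕ} (hm : 1 ≤ m) {L : ℝ} (hL : Hsum (m-1) ≤ L) :
    ∑ k ∈ Finset.Ico 1 m, 1/((k:ℝ)*((m-k:ℕ):ℝ)) ≤ 2*L/m := by
  have hmpos : (0:ℝ) < m := by exact_mod_cast hm
  have h1 : ∀ k ∈ Finset.Ico 1 m,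
      1/((k:ℝ)*((m-k:ℕ):ℝ)) = 1/(m:ℝ) * (1/(k:ℝ) + 1/((m-k:ℕ):ℝ)) := by
    intro k hk
    rw [Finset.mem_Ico] at hk
    have hk1 : (1:ℝ) ≤ k := by exact_mod_cast hk.1
    have hkm : k < m := hk.2
    have hsub : ((m-k:ℕ):ℝ) = (m:ℝ) - k := by
      rw [Nat.cast_sub hkm.le]
    have hpos : (0:ℝ) < ((m-k:ℕ):ℝ) := by
      rw [hsub]
      have : (k:ℝ) < m := by exact_mod_cast hkm
      linarith
    rw [hsub] at hpos ⊢
    field_simp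
    try ring
  rw [Finset.sum_congr rfl h1, ← Finset.mul_sum, Finset.sum_add_distrib]
  have hA : ∑ k ∈ Finset.Ico 1 m, 1/(k:ℝ) = Hsum (m-1) := by
    rw [Finset.sum_Ico_eq_sum_range]
    unfold Hsum
    apply Finset.sum_congr rfl
    intro j _
    push_cast
    ring
  have hB : ∑ k ∈ Finset.Ico 1 m, 1/((m-k:ℕ):ℝ) = ∑ k ∈ Finset.Ico 1 m, 1/(k:ℝ) := by
    refine Finset.sum_nbij' (fun k => m - k) (fun k => m - k) ?_ ?_ ?_ ?_ ?_ <;>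
      intro a ha <;> simp only [Finset.mem_Ico] at ha ⊢ <;> first | omega | rfl
  rw [hA, hB, hA]
  have hfin : Hsum (m-1) + Hsum (m-1) ≤ 2*L := by linarith
  calc 1/(m:ℝ) * (Hsum (m-1) + Hsum (m-1)) ≤ 1/(m:ℝ) * (2*L) :=
        mul_le_mul_of_nonneg_left hfin (by positivity)
    _ = 2*L/m := by ring

noncomputable def antiSum {S : Type*} [DecidableEq S] (G : S → ℕ → ℝ) (T : Finset S) (n : ℕ) : ℝ :=
  ∑ η ∈ Finset.finsuppAntidiag T n, ∏ x ∈ T, G x (η x)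

lemma antiSum_nonneg {S : Type*} [DecidableEq S] (G : S → ℕ → ℝ)
    (hG : ∀ x n, 0 ≤ G x n) (T : Finset S) (n : ℕ) : 0 ≤ antiSum G T n := by
  apply Finset.sum_nonneg
  intro η _
  exact Finset.prod_nonneg fun x _ => hG x _

lemma antiSum_empty {S : Type*} [DecidableEq S] (G : S → ℕ → ℝ) {n : ℕ} (hn : n ≠ 0) :
    antiSum G ∅ n = 0 := by
  unfold antiSum
  rw [Finset.finsuppAntidiag_empty_of_ne_zero hn, Finset.sum_empty]

lemma antiSum_zero {S : Type*} [DecidableEq S] (G : S → ℕ → ℝ) (T : Finset S) :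
    antiSum G T 0 = ∏ x ∈ T, G x 0 := by
  unfold antiSum
  rw [Finset.finsuppAntidiag_zero, Finset.sum_singleton]
  rfl

lemma antiSum_insert {S : Type*} [DecidableEq S] (G : S → ℕ → ℝ) {a : S} {T : Finset S}
    (ha : a ∉ T) (n : ℕ) :
    antiSum G (insert a T) n
      = ∑ p ∈ Finset.HasAntidiagonal.antidiagonal n, G a p.1 * antiSum G T p.2 := by
  unfold antiSum
  rw [Finset.finsuppAntidiag_insert ha, Finset.sum_biUnion]
  · apply Finset.sum_congr rfl
    intro p _
    rw [Finset.sum_map, Finset.mul_sum]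
    rw [← Finset.sum_attach (Finset.finsuppAntidiag T p.2)
      (fun η => G a p.1 * ∏ x ∈ T, G x (η x))]
    apply Finset.sum_congr rfl
    rintro ⟨η, hη⟩ _
    simp only [Function.Embedding.coeFn_mk]
    show ∏ x ∈ insert a T, G x ((Finsupp.update η a p.1) x) = _
    rw [Finset.prod_insert ha]
    have h1 : (Finsupp.update η a p.1) a = p.1 := by
      simp [Finsupp.coe_update]
    have h2 : ∀ x ∈ T, (Finsupp.update η a p.1) x = η x := by
      intro x hx
      have : x ≠ a := fun h => ha (h ▸ hx)
      simp [Finsupp.coe_update, Function.update, this]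
    rw [h1]
    congr 1
    exact Finset.prod_congr rfl fun x hx => by rw [h2 x hx]
  · intro p hp q hq hpq
    simp only [Finset.disjoint_left]
    intro f hf hg
    apply hpq
    rw [Finset.mem_coe, Finset.HasAntidiagonal.mem_antidiagonal] at hp hq
    obtain ⟨⟨η, hη⟩, _, rfl⟩ := Finset.mem_map.mp hf
    obtain ⟨⟨η', hη'⟩, _, heq⟩ := Finset.mem_map.mp hg
    change Finsupp.update η' a q.1 = Finsupp.update η a p.1 at heq
    have hval : q.1 = p.1 := by
      have := congrArg (fun g => g a) heq
      simpa [Finsupp.coe_update] using this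
    have : q = p := by
      ext
      · exact hval
      · omega
    exact this.symm

lemma sum_range_split {f : ℕ → ℝ} {n : ℕ} (hn : 1 ≤ n) :
    ∑ k ∈ Finset.range (n+1), f k = f 0 + (∑ k ∈ Finset.Ico 1 n, f k) + f n := by
  rw [Finset.range_eq_Ico, Finset.sum_eq_sum_Ico_succ_bot (by omega),
    Finset.sum_Ico_succ_top (by omega : 1 ≤ n)]
  ring

lemma antiSum_le_full {S : Type*} [DecidableEq S] (G : S → ℕ → ℝ) (a L : ℝ) (N : ℕ)
    (ha : 0 ≤ a) (hL : 1 ≤ L)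
    (hG0 : ∀ x, G x 0 = 1) (hGnn : ∀ x n, 0 ≤ G x n)
    (hGle : ∀ x n, 1 ≤ n → n ≤ N → G x n ≤ a/n)
    (hH : ∀ m, 1 ≤ m → m ≤ N →
      ∑ k ∈ Finset.Ico 1 m, 1/((k:ℝ)*((m-k:ℕ):ℝ)) ≤ 2*L/m) :
    ∀ (T : Finset S), ∀ n, 1 ≤ n → n ≤ N →
      antiSum G T n ≤ T.card * a * (1+2*a*L)^(T.card - 1) / n := by
  have hB1 : (1:ℝ) ≤ 1+2*a*L := by nlinarith
  intro T
  induction T using Finset.induction_on with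
  | empty =>
    intro n hn hnN
    rw [antiSum_empty G (by omega)]
    simp
  | @insert a' T' ha' ih =>
    intro n hn hnN
    have hnpos : (0:ℝ) < n := by exact_mod_cast hn
    set t := T'.card with hct
    set B : ℝ := 1+2*a*L with hBdef
    have hBpow : ∀ j : ℕ, (1:ℝ) ≤ B^j := fun j => one_le_pow₀ hB1
    set c : ℝ := t * a * B^(t-1) with hc
    have hcnn : 0 ≤ c := by positivity
    rw [antiSum_insert G ha', Finset.Nat.sum_antidiagonal_eq_sum_range_succ_mk,
      sum_range_split hn]
    simp only
    have h0 : G a' 0 * antiSum G T' (n - 0) ≤ c / n := by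
      rw [hG0 a', one_mul, Nat.sub_zero]
      exact ih n hn hnN
    have hn' : G a' n * antiSum G T' (n - n) ≤ a / n := by
      rw [Nat.sub_self, antiSum_zero]
      rw [Finset.prod_congr rfl (fun x _ => hG0 x), Finset.prod_const_one, mul_one]
      exact hGle a' n hn hnN
    have hmid : ∑ k ∈ Finset.Ico 1 n, G a' k * antiSum G T' (n - k)
        ≤ a * c * (2*L/n) := by
      calc ∑ k ∈ Finset.Ico 1 n, G a' k * antiSum G T' (n - k)
          ≤ ∑ k ∈ Finset.Ico 1 n, (a/k) * (c/((n-k:ℕ):ℝ)) := by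
            apply Finset.sum_le_sum
            intro k hk
            rw [Finset.mem_Ico] at hk
            have hk1 : 1 ≤ k := hk.1
            have hkn : k < n := hk.2
            have hnk1 : 1 ≤ n - k := by omega
            have hnkN : n - k ≤ N := by omega
            apply mul_le_mul (hGle a' k hk1 (by omega)) (ih _ hnk1 hnkN)
              (antiSum_nonneg G hGnn T' _) (by positivity)
        _ = a * c * ∑ k ∈ Finset.Ico 1 n, 1/((k:ℝ)*((n-k:ℕ):ℝ)) := by
            rw [Finset.mul_sum]
            apply Finset.sum_congr rfl
            intro k _
            field_simp
            try ring
        _ ≤ a * c * (2*L/n) := by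
            apply mul_le_mul_of_nonneg_left (hH n hn hnN) (by positivity)
    have hcard : (insert a' T').card = t + 1 := Finset.card_insert_of_notMem ha'
    rw [hcard]
    have key : c/n + a * c * (2*L/n) + a/n ≤ (t+1) * a * B^t / n := by
      have hcB : c * B = t * a * B^(t-1) * B := by rw [hc]
      have hBt : (t:ℝ) * a * B^(t-1) * B ≤ t * a * B^t := by
        rcases Nat.eq_zero_or_pos t with h | h
        · simp [h]
        · have ht1 : t - 1 + 1 = t := by omega
          have : (t:ℝ)*a*B^(t-1)*B = (t:ℝ)*a*B^(t-1+1) := by ring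
          rw [this, ht1]
      have haB : a ≤ a * B^t := le_mul_of_one_le_right ha (hBpow t)
      have hnum : c + 2*a*L*c + a ≤ (↑t+1)*a*B^t := by
        have hcB2 : c + 2*a*L*c = c*B := by rw [hBdef]; ring
        calc c + 2*a*L*c + a = c*B + a := by rw [hcB2]
          _ ≤ t * a * B^t + a * B^t := add_le_add (hcB ▸ hBt) haB
          _ = (↑t+1)*a*B^t := by ring
      calc c/n + a * c * (2*L/n) + a/n = (c + 2*a*L*c + a)/n := by ring
        _ ≤ ((↑t+1) * a * B^t)/n := by gcongr
    calc G a' 0 * antiSum G T' (n-0) + (∑ k ∈ Finset.Ico 1 n, G a' k * antiSum G T' (n-k))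
          + G a' n * antiSum G T' (n-n)
        ≤ c/n + a * c * (2*L/n) + a/n := by
          apply add_le_add (add_le_add h0 hmid) hn'
      _ ≤ (t+1) * a * B^t / n := key
      _ = ((t+1):ℕ) * a * B^(((t+1):ℕ) - 1) / n := by
          push_cast
          norm_num

lemma antiSum_le_refined {S : Type*} [DecidableEq S] (G : S → ℕ → ℝ) (a L : ℝ) (N : ℕ)
    (ha : 0 ≤ a) (hL : 1 ≤ L)
    (hG0 : ∀ x, G x 0 = 1) (hGnn : ∀ x n, 0 ≤ G x n)
    (hGle : ∀ x n, 1 ≤ n → n ≤ N → G x n ≤ a/n)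
    (hH : ∀ m, 1 ≤ m → m ≤ N →
      ∑ k ∈ Finset.Ico 1 m, 1/((k:ℝ)*((m-k:ℕ):ℝ)) ≤ 2*L/m) :
    ∀ (T : Finset S), ∀ n, 1 ≤ n → n ≤ N →
      antiSum G T n ≤ (∑ x ∈ T, G x n) + 2*L*a^2*T.card^2*(1+2*a*L)^(T.card)/n := by
  have hB1 : (1:ℝ) ≤ 1+2*a*L := by nlinarith
  intro T
  induction T using Finset.induction_on with
  | empty =>
    intro n hn hnN
    rw [antiSum_empty G (by omega)]
    have hnpos : (0:ℝ) < n := by exact_mod_cast hn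
    simp only [Finset.sum_empty, Finset.card_empty]
    positivity
  | @insert a' T' ha' ih =>
    intro n hn hnN
    have hnpos : (0:ℝ) < n := by exact_mod_cast hn
    set t := T'.card with hct
    set B : ℝ := 1+2*a*L with hBdef
    have hBpow : ∀ j : ℕ, (1:ℝ) ≤ B^j := fun j => one_le_pow₀ hB1
    set c : ℝ := t * a * B^(t-1) with hc
    have hcnn : 0 ≤ c := by positivity
    have hfull := antiSum_le_full G a L N ha hL hG0 hGnn hGle hH T'
    rw [antiSum_insert G ha', Finset.Nat.sum_antidiagonal_eq_sum_range_succ_mk,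
      sum_range_split hn]
    simp only
    have h0 : G a' 0 * antiSum G T' (n - 0)
        ≤ (∑ x ∈ T', G x n) + 2*L*a^2*t^2*B^t/n := by
      rw [hG0 a', one_mul, Nat.sub_zero]
      exact ih n hn hnN
    have hn' : G a' n * antiSum G T' (n - n) = G a' n := by
      rw [Nat.sub_self, antiSum_zero]
      rw [Finset.prod_congr rfl (fun x _ => hG0 x), Finset.prod_const_one, mul_one]
    have hmid : ∑ k ∈ Finset.Ico 1 n, G a' k * antiSum G T' (n - k)
        ≤ a * c * (2*L/n) := by
      calc ∑ k ∈ Finset.Ico 1 n, G a' k * antiSum G T' (n - k)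
          ≤ ∑ k ∈ Finset.Ico 1 n, (a/k) * (c/((n-k:ℕ):ℝ)) := by
            apply Finset.sum_le_sum
            intro k hk
            rw [Finset.mem_Ico] at hk
            have hk1 : 1 ≤ k := hk.1
            have hkn : k < n := hk.2
            have hnk1 : 1 ≤ n - k := by omega
            have hnkN : n - k ≤ N := by omega
            apply mul_le_mul (hGle a' k hk1 (by omega)) (hfull _ hnk1 hnkN)
              (antiSum_nonneg G hGnn T' _) (by positivity)
        _ = a * c * ∑ k ∈ Finset.Ico 1 n, 1/((k:ℝ)*((n-k:ℕ):ℝ)) := by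
            rw [Finset.mul_sum]
            apply Finset.sum_congr rfl
            intro k _
            field_simp
            try ring
        _ ≤ a * c * (2*L/n) := by
            apply mul_le_mul_of_nonneg_left (hH n hn hnN) (by positivity)
    have hcard : (insert a' T').card = t + 1 := Finset.card_insert_of_notMem ha'
    rw [hcard, Finset.sum_insert ha']
    have key : 2*L*a^2*t^2*B^t/n + a * c * (2*L/n)
        ≤ 2*L*a^2*((t:ℝ)+1)^2*B^(t+1)/n := by
      have hmval : a * c * (2*L/n) = 2*L*a^2*(t*B^(t-1))/n := by
        rw [hc]; ring
      have hb1 : B^t ≤ B^(t+1) := pow_le_pow_right₀ hB1 (by omega)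
      have hb2 : B^(t-1) ≤ B^(t+1) := pow_le_pow_right₀ hB1 (by omega)
      have htn : (0:ℝ) ≤ t := Nat.cast_nonneg t
      have hLa : (0:ℝ) ≤ 2*L*a^2 := by positivity
      have base : (t:ℝ)^2*B^t + t*B^(t-1) ≤ ((t:ℝ)+1)^2*B^(t+1) := by
        nlinarith [sq_nonneg (t:ℝ), hBpow (t+1)]
      have hnum : 2*L*a^2*(t:ℝ)^2*B^t + 2*L*a^2*((t:ℝ)*B^(t-1))
          ≤ 2*L*a^2*(((t:ℝ)+1)^2*B^(t+1)) := by
        calc 2*L*a^2*(t:ℝ)^2*B^t + 2*L*a^2*((t:ℝ)*B^(t-1))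
            = 2*L*a^2*((t:ℝ)^2*B^t + (t:ℝ)*B^(t-1)) := by ring
          _ ≤ 2*L*a^2*(((t:ℝ)+1)^2*B^(t+1)) := mul_le_mul_of_nonneg_left base hLa
      calc 2*L*a^2*(t:ℝ)^2*B^t/n + a * c * (2*L/n)
          = (2*L*a^2*(t:ℝ)^2*B^t + 2*L*a^2*((t:ℝ)*B^(t-1)))/n := by
            rw [hc]; ring
        _ ≤ (2*L*a^2*(((t:ℝ)+1)^2*B^(t+1)))/n := by gcongr
        _ = 2*L*a^2*((t:ℝ)+1)^2*B^(t+1)/n := by ring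
    calc G a' 0 * antiSum G T' (n-0) + (∑ k ∈ Finset.Ico 1 n, G a' k * antiSum G T' (n-k))
          + G a' n * antiSum G T' (n-n)
        ≤ ((∑ x ∈ T', G x n) + 2*L*a^2*t^2*B^t/n) + a * c * (2*L/n) + G a' n := by
          apply add_le_add (add_le_add h0 hmid)
          rw [hn']
      _ = (G a' n + ∑ x ∈ T', G x n) + (2*L*a^2*t^2*B^t/n + a * c * (2*L/n)) := by ring
      _ ≤ (G a' n + ∑ x ∈ T', G x n) + 2*L*a^2*((t:ℝ)+1)^2*B^(t+1)/n := by
          apply add_le_add_right key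
      _ = (G a' n + ∑ x ∈ T', G x n) + 2*L*a^2*(((t+1):ℕ):ℝ)^2*B^(t+1)/n := by
          push_cast
          ring

lemma single_sum_univ {S : Type*} [Fintype S] [DecidableEq S] (x : S) (N : ℕ) :
    ∑ z, (Finsupp.single x N) z = N := by
  rw [Finset.sum_eq_single_of_mem x (Finset.mem_univ x)
    (fun b _ hb => Finsupp.single_eq_of_ne' (Ne.symm hb))]
  exact Finsupp.single_eq_same

lemma single_mem_antidiag {S : Type*} [Fintype S] [DecidableEq S] (x : S) (N : ℕ) :
    Finsupp.single x N ∈ Finset.finsuppAntidiag (Finset.univ : Finset S) N := by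
  rw [Finset.mem_finsuppAntidiag]
  exact ⟨single_sum_univ x N, fun z _ => Finset.mem_univ z⟩

lemma prod_single_eval {S : Type*} [Fintype S] [DecidableEq S] (G : S → ℕ → ℝ)
    (hG0 : ∀ z, G z 0 = 1) (x : S) (N : ℕ) :
    ∏ z, G z ((Finsupp.single x N) z) = G x N := by
  rw [Finset.prod_eq_single x
    (fun b _ hb => by rw [Finsupp.single_eq_of_ne' (Ne.symm hb), hG0])
    (fun h => absurd (Finset.mem_univ x) h)]
  rw [Finsupp.single_eq_same]

set_option maxHeartbeats 2000000 in
/-- Condensation of the reversible inclusion process. Under `d_N·log N → 0`,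
for each `x ∈ S_⋆` the invariant probability of the fully condensed configuration `ξ_N^x`
tends to `1/|S_⋆|`; consequently the total mass of non-condensed configurations tends
to `0`. -/
theorem inclusion_process_condensation
    {S : Type*} [Fintype S] [DecidableEq S] [Nonempty S]
    (m : S → ℝ) (M : ℝ) (hm : ∀ x, 0 < m x) (hmsum : ∑ x, m x = 1)
    (hM : IsGreatest (Set.range m) M)
    (d : ℕ → ℝ) (hd : ∀ N, 0 < d N)
    (hdlog : Filter.Tendsto (fun N => d N * Real.log N) Filter.atTop (nhds 0))
    (Z : ℕ → ℝ)
    (hZ : ∀ N, Z N = ∑ η ∈ Finset.finsuppAntidiag (Finset.univ : Finset S) N,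
        ∏ x, inclW (d N) (η x) * (m x / M) ^ (η x))
    (μ : ℕ → (S →₀ ℕ) → ℝ)
    (hμ : ∀ N η, μ N η = (∏ x, inclW (d N) (η x) * (m x / M) ^ (η x)) / Z N)
    (Sstar : Finset S) (hSstar : Sstar = Finset.univ.filter (fun x => m x = M)) :
    (∀ x ∈ Sstar, Filter.Tendsto (fun N => μ N (Finsupp.single x N))
        Filter.atTop (nhds (1 / (Sstar.card : ℝ)))) ∧
    Filter.Tendsto (fun N =>
        ∑ η ∈ (Finset.finsuppAntidiag (Finset.univ : Finset S) N).filter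
          (fun η => ∀ x ∈ Sstar, η ≠ Finsupp.single x N), μ N η)
      Filter.atTop (nhds 0) := by
  classical
  obtain ⟨x₀, hx₀⟩ := hM.1
  have hub : ∀ x, m x ≤ M := fun x => hM.2 ⟨x, rfl⟩
  have hMpos : (0:ℝ) < M := hx₀ ▸ hm x₀
  have hx₀star : x₀ ∈ Sstar := by rw [hSstar]; simp [hx₀]
  have hsne : Sstar.Nonempty := ⟨x₀, hx₀star⟩
  have hscard : 1 ≤ Sstar.card := Finset.card_pos.mpr hsne
  have hscardR : (0:ℝ) < Sstar.card := by exact_mod_cast hscard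
  have hq0 : ∀ x, 0 < m x / M := fun x => div_pos (hm x) hMpos
  have hq1 : ∀ x, m x / M ≤ 1 := fun x => (div_le_one hMpos).mpr (hub x)
  have hqstar : ∀ x ∈ Sstar, m x / M = 1 := by
    intro x hx
    rw [hSstar, Finset.mem_filter] at hx
    rw [hx.2, div_self (ne_of_gt hMpos)]
  have hqlt : ∀ x, x ∉ Sstar → m x / M < 1 := by
    intro x hx
    rw [hSstar, Finset.mem_filter] at hx
    have : m x ≠ M := fun h => hx ⟨Finset.mem_univ x, h⟩
    exact (div_lt_one hMpos).mpr (lt_of_le_of_ne (hub x) this)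
  set s : ℕ := Fintype.card S with hs
  -- basic weight facts
  have hwpos : ∀ N, 0 < inclW (d N) N := fun N => inclW_pos (hd N) N
  -- the non-condensed numerator
  set Rnum : ℕ → ℝ := fun N =>
    ∑ η ∈ (Finset.finsuppAntidiag (Finset.univ : Finset S) N).filter
      (fun η => ∀ x ∈ Sstar, η ≠ Finsupp.single x N),
      ∏ x, inclW (d N) (η x) * (m x / M) ^ (η x) with hRnum
  have hprodnn : ∀ N (η : S →₀ ℕ), 0 ≤ ∏ x, inclW (d N) (η x) * (m x / M) ^ (η x) := by
    intro N η
    apply Finset.prod_nonneg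
    intro x _
    exact mul_nonneg (inclW_pos (hd N) _).le (pow_nonneg (hq0 x).le _)
  have hRnn : ∀ N, 0 ≤ Rnum N := by
    intro N
    exact Finset.sum_nonneg fun η _ => hprodnn N η
  have hG0 : ∀ N (x : S), inclW (d N) 0 * (m x / M) ^ (0:ℕ) = 1 := by
    intro N x
    simp [inclW]
  -- value of condensed configurations
  have hcondval : ∀ N, ∀ x ∈ Sstar,
      (∏ z, inclW (d N) ((Finsupp.single x N) z) * (m z / M) ^ ((Finsupp.single x N) z))
        = inclW (d N) N := by
    intro N x hx
    rw [prod_single_eval (fun z n => inclW (d N) n * (m z / M)^n) (hG0 N) x N]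
    rw [hqstar x hx, one_pow, mul_one]
  -- splitting of the partition function
  have hsplit : ∀ N, 1 ≤ N → Z N = Rnum N + Sstar.card * inclW (d N) N := by
    intro N hN
    rw [hZ N,
      ← Finset.sum_filter_add_sum_filter_not (Finset.finsuppAntidiag Finset.univ N)
        (fun η => ∀ x ∈ Sstar, η ≠ Finsupp.single x N)]
    congr 1
    have hset : (Finset.finsuppAntidiag (Finset.univ : Finset S) N).filter
        (fun η => ¬ ∀ x ∈ Sstar, η ≠ Finsupp.single x N)
        = Sstar.image (fun x => Finsupp.single x N) := by
      ext η
      simp only [Finset.mem_filter, Finset.mem_image, not_forall]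
      constructor
      · rintro ⟨-, x, hx, h⟩
        exact ⟨x, hx, (not_ne_iff.mp h).symm⟩
      · rintro ⟨x, hx, rfl⟩
        exact ⟨single_mem_antidiag x N, x, hx, by simp⟩
    rw [hset]
    rw [Finset.sum_image ?hinj]
    case hinj =>
      intro x _ y _ h
      by_contra hxy
      have := DFunLike.congr_fun h x
      rw [Finsupp.single_eq_same, Finsupp.single_eq_of_ne' (Ne.symm hxy)] at this
      omega
    rw [Finset.sum_congr rfl (fun x hx => hcondval N x hx), Finset.sum_const,
      nsmul_eq_mul]
  -- eventual bound for the normalized non-condensed mass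
  set u : ℕ → ℝ := fun N => d N * (1 + Real.log N) with hu
  set bnd : ℕ → ℝ := fun N =>
    (∑ x ∈ Finset.univ \ Sstar, (m x/M)^N)
      + 2*(s:ℝ)^2*(u N)*(Real.exp (u N))^2*(1+2*Real.exp (u N)*(u N))^s with hbnd
  have hkey : ∀ N, 1 ≤ N → Rnum N / inclW (d N) N ≤ bnd N := by
    intro N hN
    have hNpos : (0:ℝ) < N := by exact_mod_cast hN
    set L : ℝ := 1 + Real.log N with hL
    have hlogN : 0 ≤ Real.log N := Real.log_natCast_nonneg N
    have hL1 : 1 ≤ L := by rw [hL]; linarith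
    have hL0 : 0 ≤ L := by linarith
    have huN : u N = d N * L := rfl
    set K : ℝ := Real.exp (u N) with hK
    have hK1 : 1 ≤ K := by
      rw [hK]
      apply Real.one_le_exp
      rw [huN]
      exact mul_nonneg (hd N).le hL0
    have hK0 : 0 ≤ K := le_trans zero_le_one hK1
    set a : ℝ := K * d N with ha
    have ha0 : 0 ≤ a := mul_nonneg hK0 (hd N).le
    set G : S → ℕ → ℝ := fun x n => inclW (d N) n * (m x/M)^n with hG
    have hGnn : ∀ x n, 0 ≤ G x n := fun x n =>
      mul_nonneg (inclW_pos (hd N) _).le (pow_nonneg (hq0 x).le _)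
    have hGle : ∀ x n, 1 ≤ n → n ≤ N → G x n ≤ a/n := by
      intro x n h1 h2
      have hnposR : (0:ℝ) < n := by exact_mod_cast h1
      calc G x n ≤ inclW (d N) n * 1 := by
            apply mul_le_mul_of_nonneg_left
              (pow_le_one₀ (hq0 x).le (hq1 x)) (inclW_pos (hd N) n).le
        _ = inclW (d N) n := mul_one _
        _ ≤ d N / n * Real.exp (d N * Hsum (n-1)) := inclW_upper (hd N) h1
        _ ≤ d N / n * Real.exp (d N * L) := by
            apply mul_le_mul_of_nonneg_left _ (div_nonneg (hd N).le hnposR.le)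
            apply Real.exp_le_exp.mpr
            exact mul_le_mul_of_nonneg_left (Hsum_pred_le h2 hN) (hd N).le
        _ = a / n := by rw [ha, hK, huN]; ring
    have hH : ∀ mm, 1 ≤ mm → mm ≤ N →
        ∑ k ∈ Finset.Ico 1 mm, 1/((k:ℝ)*((mm-k:ℕ):ℝ)) ≤ 2*L/mm := by
      intro mm h1 h2
      exact conv_bound h1 (Hsum_pred_le h2 hN)
    have happ := antiSum_le_refined G a L N ha0 hL1 (fun x => hG0 N x) hGnn hGle hH
      Finset.univ N hN le_rfl
    rw [Finset.card_univ, ← hs] at happ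
    have hZa : antiSum G Finset.univ N = Z N := by
      rw [hZ N]
      rfl
    set w : ℝ := inclW (d N) N with hw
    set Sig : ℝ := ∑ x ∈ Finset.univ \ Sstar, (m x/M)^N with hSig
    have hSig0 : 0 ≤ Sig := Finset.sum_nonneg fun x _ => pow_nonneg (hq0 x).le _
    have hGx : ∀ x ∈ Sstar, G x N = w := by
      intro x hx
      show inclW (d N) N * (m x/M)^N = w
      rw [hqstar x hx, one_pow, mul_one]
    have hsum_star : ∑ x ∈ Sstar, G x N = Sstar.card * w := by
      calc ∑ x ∈ Sstar, G x N = ∑ _x ∈ Sstar, w := Finset.sum_congr rfl hGx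
        _ = Sstar.card * w := by rw [Finset.sum_const, nsmul_eq_mul]
    have hsum_split : ∑ x, G x N = w * Sig + Sstar.card * w := by
      rw [← Finset.sum_sdiff (Finset.subset_univ Sstar), hsum_star]
      congr 1
      rw [hSig, Finset.mul_sum]
      try exact Finset.sum_congr rfl (fun x _ => rfl)
    set Y : ℝ := 2*L*a^2*(s:ℝ)^2*(1+2*a*L)^s with hY
    have hY0 : 0 ≤ Y := by
      have hB0 : (0:ℝ) ≤ 1+2*a*L := by nlinarith
      rw [hY]
      positivity
    have hRZ : Rnum N = Z N - Sstar.card * w := by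
      rw [hsplit N hN, hw]; ring
    have hRb : Rnum N ≤ w * Sig + Y/N := by
      rw [hRZ, ← hZa]
      rw [hsum_split] at happ
      calc antiSum G Finset.univ N - Sstar.card * w
          ≤ (w * Sig + Sstar.card * w + 2*L*a^2*(s:ℝ)^2*(1+2*a*L)^s/N)
              - Sstar.card * w := sub_le_sub_right happ _
        _ = w * Sig + Y/N := by rw [hY]; ring
    have hwlow : d N / N ≤ w := inclW_lower (hd N) hN
    have hwp : 0 < w := hwpos N
    have hdN : 0 < d N := hd N
    have hRnnN : 0 ≤ Rnum N := hRnn N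
    have hstep : Rnum N / w ≤ Sig + (Y/N)/w := by
      calc Rnum N / w ≤ (w * Sig + Y/N)/w := (div_le_div_iff_of_pos_right hwp).mpr hRb
        _ = Sig + (Y/N)/w := by
            rw [add_div, mul_div_cancel_left₀ Sig (ne_of_gt hwp)]
    have hstep2 : (Y/N)/w ≤ Y / d N := by
      calc (Y/N)/w ≤ (Y/N)/(d N/N) :=
            div_le_div_of_nonneg_left (div_nonneg hY0 hNpos.le)
              (div_pos hdN hNpos) hwlow
        _ = Y / d N := by
            rw [div_div_div_comm, div_self (ne_of_gt hNpos), div_one]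
    have hfinal : Y / d N
        = 2*(s:ℝ)^2*(u N)*(Real.exp (u N))^2*(1+2*Real.exp (u N)*(u N))^s := by
      have hB : 1+2*a*L = 1+2*Real.exp (u N)*(u N) := by
        rw [ha, hK, huN]; ring
      rw [hY, hB, ha, hK, huN]
      field_simp
    rw [hbnd]
    simp only
    rw [← hSig, ← hfinal]
    calc Rnum N / w ≤ Sig + (Y/N)/w := hstep
      _ ≤ Sig + Y / d N := add_le_add_right (hstep2.trans le_rfl) Sig
  -- convergence of `d` and `u` to zero
  have hlogtop : Filter.Tendsto (fun N : ℕ => Real.log N) Filter.atTop Filter.atTop :=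
    Real.tendsto_log_atTop.comp tendsto_natCast_atTop_atTop
  have hloginv : Filter.Tendsto (fun N : ℕ => (Real.log N)⁻¹) Filter.atTop (nhds 0) :=
    hlogtop.inv_tendsto_atTop
  have hd0 : Filter.Tendsto d Filter.atTop (nhds 0) := by
    have hmul := hdlog.mul hloginv
    rw [mul_zero] at hmul
    apply hmul.congr'
    filter_upwards [Filter.eventually_ge_atTop 2] with N hN
    have h2 : (1:ℝ) < N := by exact_mod_cast (by omega : 1 < N)
    have hne : Real.log N ≠ 0 := ne_of_gt (Real.log_pos h2)
    field_simp
  have hu0 : Filter.Tendsto u Filter.atTop (nhds 0) := by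
    have h := hd0.add hdlog
    rw [add_zero] at h
    apply h.congr
    intro N
    rw [hu]
    ring
  have hcont : Filter.Tendsto
      (fun N => 2*(s:ℝ)^2*(u N)*(Real.exp (u N))^2*(1+2*Real.exp (u N)*(u N))^s)
      Filter.atTop (nhds 0) := by
    have hF : Continuous (fun v : ℝ => 2*(s:ℝ)^2*v*(Real.exp v)^2*(1+2*Real.exp v*v)^s) := by
      fun_prop
    have := (hF.tendsto 0).comp hu0
    simpa [Function.comp_def] using this
  have hSigLim : Filter.Tendsto (fun N => ∑ x ∈ Finset.univ \ Sstar, (m x/M)^N)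
      Filter.atTop (nhds 0) := by
    have h := tendsto_finset_sum (Finset.univ \ Sstar)
      (f := fun (x : S) (N : ℕ) => (m x/M)^N) (a := fun _ => (0:ℝ))
      (fun x hx => tendsto_pow_atTop_nhds_zero_of_lt_one (hq0 x).le
        (hqlt x (Finset.mem_sdiff.mp hx).2))
    simpa using h
  have hbnd0 : Filter.Tendsto bnd Filter.atTop (nhds 0) := by
    have h := hSigLim.add hcont
    rw [add_zero] at h
    exact h
  set r : ℕ → ℝ := fun N => Rnum N / inclW (d N) N with hr
  have hrnn : ∀ N, 0 ≤ r N := fun N => div_nonneg (hRnn N) (hwpos N).le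
  have hr0 : Filter.Tendsto r Filter.atTop (nhds 0) := by
    apply squeeze_zero' (Filter.Eventually.of_forall hrnn) ?_ hbnd0
    filter_upwards [Filter.eventually_ge_atTop 1] with N hN
    exact hkey N hN
  have hden : ∀ N, (0:ℝ) < Sstar.card + r N :=
    fun N => lt_of_lt_of_le hscardR (le_add_of_nonneg_right (hrnn N))
  have hZw : ∀ N, 1 ≤ N → Z N = inclW (d N) N * ((Sstar.card : ℝ) + r N) := by
    intro N hN
    rw [hsplit N hN, hr]
    have hwne : inclW (d N) N ≠ 0 := ne_of_gt (hwpos N)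
    field_simp
    ring
  have hdenLim : Filter.Tendsto (fun N => (Sstar.card:ℝ) + r N) Filter.atTop
      (nhds ((Sstar.card:ℝ))) := by
    have h := (tendsto_const_nhds (x := ((Sstar.card:ℝ))) (f := Filter.atTop (α := ℕ))).add hr0
    rw [add_zero] at h
    exact h
  constructor
  · intro x hx
    have heq : ∀ᶠ N in Filter.atTop,
        (1:ℝ)/((Sstar.card:ℝ) + r N) = μ N (Finsupp.single x N) := by
      filter_upwards [Filter.eventually_ge_atTop 1] with N hN
      rw [hμ, hcondval N x hx, hZw N hN]
      have hwne : inclW (d N) N ≠ 0 := ne_of_gt (hwpos N)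
      have hdne : (Sstar.card:ℝ) + r N ≠ 0 := ne_of_gt (hden N)
      field_simp
    have hlim : Filter.Tendsto (fun N => 1/((Sstar.card:ℝ) + r N)) Filter.atTop
        (nhds (1/(Sstar.card:ℝ))) :=
      tendsto_const_nhds.div hdenLim (ne_of_gt hscardR)
    exact Filter.Tendsto.congr' heq hlim
  · have heq2 : ∀ᶠ N in Filter.atTop,
        r N/((Sstar.card:ℝ) + r N)
          = ∑ η ∈ (Finset.finsuppAntidiag (Finset.univ : Finset S) N).filter
              (fun η => ∀ x ∈ Sstar, η ≠ Finsupp.single x N), μ N η := by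
      filter_upwards [Filter.eventually_ge_atTop 1] with N hN
      have hwne : inclW (d N) N ≠ 0 := ne_of_gt (hwpos N)
      have hdne : (Sstar.card:ℝ) + r N ≠ 0 := ne_of_gt (hden N)
      have hsum : ∑ η ∈ (Finset.finsuppAntidiag (Finset.univ : Finset S) N).filter
              (fun η => ∀ x ∈ Sstar, η ≠ Finsupp.single x N), μ N η
          = Rnum N / Z N := by
        rw [Finset.sum_congr rfl (fun η _ => hμ N η), ← Finset.sum_div, hRnum]
      rw [hsum, hZw N hN, hr]
      field_simp
      try ring
    have hlim2 : Filter.Tendsto (fun N => r N/((Sstar.card:ℝ) + r N)) Filter.atTop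
        (nhds 0) := by
      have h := hr0.div hdenLim (ne_of_gt hscardR)
      rw [zero_div] at h
      exact h
    exact Filter.Tendsto.congr' heq2 hlim2
end

section
/- Mean jump rate formula via capacities (reversible case): for a reversible Markov chain on a finite space with invariant measure μ and disjoint nonempty sets E_i, E_j contained in a set E = ∪_k E_k, the trace process rates satisfy μ(E_i)·r⋆(i,j) = (1/2)[Cap(E_i, E∖E_i) + Cap(E_j, E∖E_j) − Cap(E_i∪E_j, E∖(E_i∪E_j))], where r⋆(i,j) = (1/μ(E_i))·Σ_{η∈E_i} μ(η) Σ_{ζ∈E_j} q⋆(η,ζ) and q⋆ is the transition rate of the process traced on E. -/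
/-- Maximum principle: a function vanishing on a nonempty set `EU` and harmonic off `EU`
(w.r.t. an irreducible rate matrix) is nonpositive everywhere. -/
lemma harm_nonpos {H : Type*} [Fintype H] [DecidableEq H]
    (q : H → H → ℝ) (hq0 : ∀ η ζ, 0 ≤ q η ζ)
    (hirr : ∀ η ζ, Relation.ReflTransGen (fun a b => 0 < q a b) η ζ)
    (EU : Finset H) (hne : EU.Nonempty)
    (u : H → ℝ) (hbd : ∀ η ∈ EU, u η = 0)
    (hharm : ∀ η, η ∉ EU → ∑ ζ, q η ζ * (u ζ - u η) = 0) :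
    ∀ η, u η ≤ 0 := by
  obtain ⟨ζ₀, hζ₀⟩ := hne
  obtain ⟨η₀, -, hmax⟩ := Finset.exists_max_image Finset.univ u ⟨ζ₀, Finset.mem_univ ζ₀⟩
  have hmax' : ∀ a, u a ≤ u η₀ := fun a => hmax a (Finset.mem_univ a)
  intro η
  refine le_trans (hmax' η) ?_
  have key : ∀ a, Relation.ReflTransGen (fun x y => 0 < q x y) a ζ₀ →
      u a = u η₀ → u η₀ ≤ 0 := by
    intro a h
    induction h using Relation.ReflTransGen.head_induction_on with
    | refl => intro ha; rw [← ha, hbd ζ₀ hζ₀]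
    | @head a b hab hbc ih =>
      intro ha
      by_cases hmem : a ∈ EU
      · rw [← ha, hbd a hmem]
      · have hz := hharm a hmem
        have hnp : ∀ ζ ∈ Finset.univ, q a ζ * (u ζ - u a) ≤ 0 := by
          intro ζ _
          have : u ζ - u a ≤ 0 := by
            rw [ha]; exact sub_nonpos.mpr (hmax' ζ)
          exact mul_nonpos_of_nonneg_of_nonpos (hq0 a ζ) this
        have hzero := (Finset.sum_eq_zero_iff_of_nonpos hnp).mp hz b (Finset.mem_univ b)
        have hub : u b = u a := by
          rcases mul_eq_zero.mp hzero with h' | h'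
          · exact absurd h' (ne_of_gt hab)
          · linarith [sub_eq_zero.mp h']
        exact ih (hub.trans ha)
  exact key η₀ (hirr η₀ ζ₀) rfl

/-- Uniqueness: a function vanishing on nonempty `EU` and harmonic off `EU` is zero. -/
lemma harm_zero {H : Type*} [Fintype H] [DecidableEq H]
    (q : H → H → ℝ) (hq0 : ∀ η ζ, 0 ≤ q η ζ)
    (hirr : ∀ η ζ, Relation.ReflTransGen (fun a b => 0 < q a b) η ζ)
    (EU : Finset H) (hne : EU.Nonempty)
    (u : H → ℝ) (hbd : ∀ η ∈ EU, u η = 0)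
    (hharm : ∀ η, η ∉ EU → ∑ ζ, q η ζ * (u ζ - u η) = 0) :
    ∀ η, u η = 0 := by
  intro η
  have h1 := harm_nonpos q hq0 hirr EU hne u hbd hharm η
  have h2 := harm_nonpos q hq0 hirr EU hne (fun x => -u x) (fun a ha => by simp [hbd a ha])
    (fun a ha => by
      have : ∀ ζ, q a ζ * (-u ζ - -u a) = -(q a ζ * (u ζ - u a)) := fun ζ => by ring
      simp only [this, Finset.sum_neg_distrib, hharm a ha, neg_zero]) η
  linarith

/-- Summation by parts for the Dirichlet bilinear form (reversible case). -/
lemma dirichlet_ibp {H : Type*} [Fintype H]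
    (q : H → H → ℝ) (μ : H → ℝ)
    (hrev : ∀ η ζ, μ η * q η ζ = μ ζ * q ζ η) (f g : H → ℝ) :
    ∑ η, ∑ ζ, μ η * q η ζ * (f ζ - f η) * (g ζ - g η)
      = -2 * ∑ η, μ η * f η * ∑ ζ, q η ζ * (g ζ - g η) := by
  have key : ∑ η, ∑ ζ, μ η * q η ζ * f ζ * (g ζ - g η)
      = ∑ η, ∑ ζ, μ η * q η ζ * f η * (g η - g ζ) := by
    calc ∑ η, ∑ ζ, μ η * q η ζ * f ζ * (g ζ - g η)
        = ∑ ζ, ∑ η, μ η * q η ζ * f ζ * (g ζ - g η) := Finset.sum_comm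
      _ = ∑ ζ, ∑ η, μ ζ * q ζ η * f ζ * (g ζ - g η) := by
          refine Finset.sum_congr rfl fun ζ _ => Finset.sum_congr rfl fun η _ => ?_
          rw [hrev]
  have split : ∑ η, ∑ ζ, μ η * q η ζ * (f ζ - f η) * (g ζ - g η)
      = (∑ η, ∑ ζ, μ η * q η ζ * f ζ * (g ζ - g η))
        - ∑ η, ∑ ζ, μ η * q η ζ * f η * (g ζ - g η) := by
    rw [← Finset.sum_sub_distrib]
    refine Finset.sum_congr rfl fun η _ => ?_
    rw [← Finset.sum_sub_distrib]
    exact Finset.sum_congr rfl fun ζ _ => by ring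
  rw [split, key]
  rw [← Finset.sum_sub_distrib]
  rw [Finset.mul_sum]
  refine Finset.sum_congr rfl fun η _ => ?_
  rw [← Finset.sum_sub_distrib, Finset.mul_sum, Finset.mul_sum]
  refine Finset.sum_congr rfl fun ζ _ => by ring



/-- Mean jump rate formula via capacities (reversible case). For a finite
irreducible reversible chain with invariant probability `μ` and a disjoint family of
nonempty sets `E_1,…,E_κ` with union `E`, the trace-process mean rates satisfy
`μ(E_i)·r⋆(i,j) = (1/2)[Cap(E_i, E∖E_i) + Cap(E_j, E∖E_j) − Cap(E_i∪E_j, E∖(E_i∪E_j))]`.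
The hitting distribution `p ζ ·` and the equilibrium potentials `h₁, h₂, h₃` are
characterized by their boundary values and harmonicity off the relevant sets; the trace
rates are `q⋆(η,ζ) = q(η,ζ) + Σ_{ξ∉E} q(η,ξ)·p ζ ξ`, and `Cap(A,B) = D(h_{A,B})`. -/
theorem mean_jump_rate_via_capacities
    {H : Type*} [Fintype H] [DecidableEq H]
    (q : H → H → ℝ) (μ : H → ℝ)
    (hq0 : ∀ η ζ, 0 ≤ q η ζ) (hqd : ∀ η, q η η = 0)
    (hμ : ∀ η, 0 < μ η) (hμ1 : ∑ η, μ η = 1)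
    (hrev : ∀ η ζ, μ η * q η ζ = μ ζ * q ζ η)
    (hirr : ∀ η ζ, Relation.ReflTransGen (fun a b => 0 < q a b) η ζ)
    (κ : ℕ) (E : Fin κ → Finset H)
    (hEne : ∀ k, (E k).Nonempty)
    (hEdisj : ∀ k l, k ≠ l → Disjoint (E k) (E l))
    (i j : Fin κ) (hij : i ≠ j)
    (EU : Finset H) (hEU : EU = Finset.univ.biUnion E)
    -- `p ζ ξ` is the probability, starting from `ξ`, of hitting `EU` first at `ζ ∈ EU`:
    (p : H → H → ℝ)
    (hp1 : ∀ ζ ∈ EU, p ζ ζ = 1)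
    (hp0 : ∀ ζ ∈ EU, ∀ ζ' ∈ EU, ζ' ≠ ζ → p ζ ζ' = 0)
    (hpharm : ∀ ζ ∈ EU, ∀ ξ, ξ ∉ EU → ∑ ξ', q ξ ξ' * (p ζ ξ' - p ζ ξ) = 0)
    -- transition rates of the process traced on `EU`:
    (qstar : H → H → ℝ)
    (hqstar : ∀ η ∈ EU, ∀ ζ ∈ EU, η ≠ ζ →
      qstar η ζ = q η ζ + ∑ ξ ∈ Finset.univ \ EU, q η ξ * p ζ ξ)
    -- equilibrium potentials of the three capacitors:
    (h₁ h₂ h₃ : H → ℝ)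
    (hh₁ : (∀ η ∈ E i, h₁ η = 1) ∧ (∀ η ∈ EU \ E i, h₁ η = 0) ∧
      ∀ η, η ∉ EU → ∑ ζ, q η ζ * (h₁ ζ - h₁ η) = 0)
    (hh₂ : (∀ η ∈ E j, h₂ η = 1) ∧ (∀ η ∈ EU \ E j, h₂ η = 0) ∧
      ∀ η, η ∉ EU → ∑ ζ, q η ζ * (h₂ ζ - h₂ η) = 0)
    (hh₃ : (∀ η ∈ E i ∪ E j, h₃ η = 1) ∧ (∀ η ∈ EU \ (E i ∪ E j), h₃ η = 0) ∧
      ∀ η, η ∉ EU → ∑ ζ, q η ζ * (h₃ ζ - h₃ η) = 0)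
    -- Dirichlet form:
    (D : (H → ℝ) → ℝ)
    (hD : ∀ f, D f = (1/2) * ∑ η, ∑ ζ, μ η * q η ζ * (f ζ - f η) ^ 2)
    -- mean jump rate of the trace process from `E i` to `E j`:
    (rstar : ℝ)
    (hrstar : rstar = (1 / ∑ η ∈ E i, μ η) *
      ∑ η ∈ E i, μ η * ∑ ζ ∈ E j, qstar η ζ) :
    (∑ η ∈ E i, μ η) * rstar = (1/2) * (D h₁ + D h₂ - D h₃) := by
  obtain ⟨hb₁, hz₁, hharm₁⟩ := hh₁
  obtain ⟨hb₂, hz₂, hharm₂⟩ := hh₂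
  obtain ⟨hb₃, hz₃, hharm₃⟩ := hh₃
  have hdisj : Disjoint (E i) (E j) := hEdisj i j hij
  have hEiU : E i ⊆ EU := by
    rw [hEU]; exact Finset.subset_biUnion_of_mem E (Finset.mem_univ i)
  have hEjU : E j ⊆ EU := by
    rw [hEU]; exact Finset.subset_biUnion_of_mem E (Finset.mem_univ j)
  obtain ⟨a₀, ha₀⟩ := hEne i
  have hneEU : EU.Nonempty := ⟨a₀, hEiU ha₀⟩
  have hμEi : 0 < ∑ η ∈ E i, μ η := Finset.sum_pos (fun η _ => hμ η) (hEne i)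
  -- Step 1: h₃ = h₁ + h₂ by uniqueness of harmonic extension
  have h3bd : ∀ a ∈ EU, h₃ a - (h₁ a + h₂ a) = 0 := by
    intro a ha
    by_cases hi : a ∈ E i
    · have hnj : a ∉ E j := fun hj => Finset.disjoint_left.mp hdisj hi hj
      rw [hb₃ a (Finset.mem_union_left _ hi), hb₁ a hi,
        hz₂ a (Finset.mem_sdiff.mpr ⟨ha, hnj⟩)]; ring
    · by_cases hj : a ∈ E j
      · rw [hb₃ a (Finset.mem_union_right _ hj), hb₂ a hj,
          hz₁ a (Finset.mem_sdiff.mpr ⟨ha, hi⟩)]; ring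
      · rw [hz₃ a (Finset.mem_sdiff.mpr ⟨ha, fun h => (Finset.mem_union.mp h).elim hi hj⟩),
          hz₁ a (Finset.mem_sdiff.mpr ⟨ha, hi⟩), hz₂ a (Finset.mem_sdiff.mpr ⟨ha, hj⟩)]; ring
  have h3harm : ∀ a, a ∉ EU →
      ∑ ζ, q a ζ * ((h₃ ζ - (h₁ ζ + h₂ ζ)) - (h₃ a - (h₁ a + h₂ a))) = 0 := by
    intro a ha
    have e : ∀ ζ, q a ζ * ((h₃ ζ - (h₁ ζ + h₂ ζ)) - (h₃ a - (h₁ a + h₂ a)))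
        = q a ζ * (h₃ ζ - h₃ a) - q a ζ * (h₁ ζ - h₁ a) - q a ζ * (h₂ ζ - h₂ a) :=
      fun ζ => by ring
    simp only [e, Finset.sum_sub_distrib, hharm₁ a ha, hharm₂ a ha, hharm₃ a ha]
    ring
  have h3eq : ∀ a, h₃ a = h₁ a + h₂ a := by
    have hz := harm_zero q hq0 hirr EU hneEU (fun x => h₃ x - (h₁ x + h₂ x)) h3bd h3harm
    intro a; have := hz a; linarith
  -- Step 2: h₂ is the sum of hitting probabilities of points of E j
  have h2bd : ∀ a ∈ EU, h₂ a - ∑ ζ ∈ E j, p ζ a = 0 := by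
    intro a ha
    by_cases hj : a ∈ E j
    · rw [hb₂ a hj,
        Finset.sum_eq_single_of_mem a hj
          (fun b hb hbne => hp0 b (hEjU hb) a ha (Ne.symm hbne)),
        hp1 a ha]; ring
    · rw [hz₂ a (Finset.mem_sdiff.mpr ⟨ha, hj⟩),
        Finset.sum_eq_zero (fun ζ hζ => hp0 ζ (hEjU hζ) a ha (fun h => hj (h ▸ hζ)))]
      ring
  have h2harm : ∀ a, a ∉ EU →
      ∑ ζ', q a ζ' * ((h₂ ζ' - ∑ ζ ∈ E j, p ζ ζ') - (h₂ a - ∑ ζ ∈ E j, p ζ a)) = 0 := by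
    intro a ha
    have e : ∀ ζ', q a ζ' * ((h₂ ζ' - ∑ ζ ∈ E j, p ζ ζ') - (h₂ a - ∑ ζ ∈ E j, p ζ a))
        = q a ζ' * (h₂ ζ' - h₂ a) - ∑ ζ ∈ E j, q a ζ' * (p ζ ζ' - p ζ a) := by
      intro ζ'
      have hs : ∑ ζ ∈ E j, q a ζ' * (p ζ ζ' - p ζ a)
          = q a ζ' * ((∑ ζ ∈ E j, p ζ ζ') - ∑ ζ ∈ E j, p ζ a) := by
        rw [← Finset.sum_sub_distrib, Finset.mul_sum]
      rw [hs]; ring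
    calc ∑ ζ', q a ζ' * ((h₂ ζ' - ∑ ζ ∈ E j, p ζ ζ') - (h₂ a - ∑ ζ ∈ E j, p ζ a))
        = ∑ ζ', (q a ζ' * (h₂ ζ' - h₂ a) - ∑ ζ ∈ E j, q a ζ' * (p ζ ζ' - p ζ a)) :=
          Finset.sum_congr rfl fun ζ' _ => e ζ'
      _ = (∑ ζ', q a ζ' * (h₂ ζ' - h₂ a))
            - ∑ ζ', ∑ ζ ∈ E j, q a ζ' * (p ζ ζ' - p ζ a) := Finset.sum_sub_distrib _ _
      _ = 0 := by
          rw [hharm₂ a ha, Finset.sum_comm,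
            Finset.sum_eq_zero (fun ζ hζ => hpharm ζ (hEjU hζ) a ha)]
          ring
  have h2rep : ∀ a, h₂ a = ∑ ζ ∈ E j, p ζ a := by
    have hz := harm_zero q hq0 hirr EU hneEU (fun x => h₂ x - ∑ ζ ∈ E j, p ζ x) h2bd h2harm
    intro a; have := hz a; linarith
  -- Step 3: cross-term expansion of the Dirichlet forms
  have hS3 : ∑ η, ∑ ζ, μ η * q η ζ * (h₃ ζ - h₃ η) ^ 2
      = (∑ η, ∑ ζ, μ η * q η ζ * (h₁ ζ - h₁ η) ^ 2)
        + (∑ η, ∑ ζ, μ η * q η ζ * (h₂ ζ - h₂ η) ^ 2)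
        + 2 * ∑ η, ∑ ζ, μ η * q η ζ * (h₁ ζ - h₁ η) * (h₂ ζ - h₂ η) := by
    rw [Finset.mul_sum, ← Finset.sum_add_distrib, ← Finset.sum_add_distrib]
    refine Finset.sum_congr rfl fun η _ => ?_
    rw [Finset.mul_sum, ← Finset.sum_add_distrib, ← Finset.sum_add_distrib]
    refine Finset.sum_congr rfl fun ζ _ => ?_
    rw [h3eq ζ, h3eq η]; ring
  have hW : (1/2) * (D h₁ + D h₂ - D h₃)
      = ∑ η, μ η * h₁ η * ∑ ζ, q η ζ * (h₂ ζ - h₂ η) := by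
    rw [hD, hD, hD, hS3, dirichlet_ibp q μ hrev h₁ h₂]; ring
  -- Step 4: reduce the left-hand side
  have hLHS : (∑ η ∈ E i, μ η) * rstar = ∑ η ∈ E i, μ η * ∑ ζ ∈ E j, qstar η ζ := by
    rw [hrstar, ← mul_assoc, mul_one_div, div_self (ne_of_gt hμEi), one_mul]
  rw [hLHS, hW]
  -- Step 5: the weighted-harmonicity sum localizes to E i
  have hW1 : ∑ η, μ η * h₁ η * ∑ ζ, q η ζ * (h₂ ζ - h₂ η)
      = ∑ η ∈ EU, μ η * h₁ η * ∑ ζ, q η ζ * (h₂ ζ - h₂ η) := by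
    symm
    apply Finset.sum_subset (Finset.subset_univ EU)
    intro a _ ha
    rw [hharm₂ a ha, mul_zero]
  have hW2 : ∑ η ∈ EU, μ η * h₁ η * ∑ ζ, q η ζ * (h₂ ζ - h₂ η)
      = ∑ η ∈ E i, μ η * h₁ η * ∑ ζ, q η ζ * (h₂ ζ - h₂ η) := by
    symm
    apply Finset.sum_subset hEiU
    intro a haEU haEi
    rw [hz₁ a (Finset.mem_sdiff.mpr ⟨haEU, haEi⟩), mul_zero, zero_mul]
  rw [hW1, hW2]
  refine Finset.sum_congr rfl fun η hη => ?_
  rw [hb₁ η hη, mul_one]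
  congr 1
  have hη2 : h₂ η = 0 :=
    hz₂ η (Finset.mem_sdiff.mpr ⟨hEiU hη, fun hj => Finset.disjoint_left.mp hdisj hη hj⟩)
  calc ∑ ζ ∈ E j, qstar η ζ
      = ∑ ζ' ∈ E j, (q η ζ' + ∑ ξ ∈ Finset.univ \ EU, q η ξ * p ζ' ξ) := by
        refine Finset.sum_congr rfl fun ζ' hζ' => ?_
        exact hqstar η (hEiU hη) ζ' (hEjU hζ')
          (fun h => Finset.disjoint_left.mp hdisj hη (h ▸ hζ'))
    _ = ∑ ζ' ∈ E j, ((∑ ζ ∈ EU, q η ζ * p ζ' ζ) + ∑ ξ ∈ Finset.univ \ EU, q η ξ * p ζ' ξ) := by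
        refine Finset.sum_congr rfl fun ζ' hζ' => ?_
        congr 1
        rw [Finset.sum_eq_single_of_mem ζ' (hEjU hζ')
          (fun b hb hbne => by rw [hp0 ζ' (hEjU hζ') b hb hbne, mul_zero]),
          hp1 ζ' (hEjU hζ'), mul_one]
    _ = ∑ ζ' ∈ E j, ∑ ζ, q η ζ * p ζ' ζ := by
        refine Finset.sum_congr rfl fun ζ' _ => ?_
        rw [add_comm, Finset.sum_sdiff (Finset.subset_univ EU)]
    _ = ∑ ζ, ∑ ζ' ∈ E j, q η ζ * p ζ' ζ := Finset.sum_comm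
    _ = ∑ ζ, q η ζ * (h₂ ζ - h₂ η) := by
        refine Finset.sum_congr rfl fun ζ _ => ?_
        rw [h2rep ζ, hη2, sub_zero, Finset.mul_sum]
end
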